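/- Let ρ: B ↠ Γ be a Fell bundle and f, g finitely supported sections. For every γ ∈ Γ, the convolution fg satisfies ‖fg(γ)‖ ≤ √(‖ff*(r(γ))‖ · ‖g*g(s(γ))‖). -/

import Mathlib

open Filter Topology

/-- An étale groupoid: a groupoid (partial multiplication encoded via `Option`,
with inverse, source and range maps) carrying a topology making inversion and
multiplication continuous, with open source map and a basis of open slices. -/
structure EtaleGroupoid (Γ : Type*) [TopologicalSpace Γ] where
  mul : Γ → Γ → Option Γ
  inv : Γ → Γ
  s : Γ → Γ
  r : Γ → Γ
  s_unit : ∀ γ, mul γ (s γ) = some γ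
  r_unit : ∀ γ, mul (r γ) γ = some γ
  mul_isSome : ∀ a b, (mul a b).isSome ↔ s a = r b
  inv_mul : ∀ γ, mul (inv γ) γ = some (s γ)
  mul_inv : ∀ γ, mul γ (inv γ) = some (r γ)
  inv_inv : ∀ γ, inv (inv γ) = γ
  s_inv : ∀ γ, s (inv γ) = r γ
  r_inv : ∀ γ, r (inv γ) = s γ
  s_s : ∀ γ, s (s γ) = s γ
  r_s : ∀ γ, r (s γ) = s γ
  inv_s : ∀ γ, inv (s γ) = s γ
  s_r : ∀ γ, s (r γ) = r γ
  r_r : ∀ γ, r (r γ) = r γ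
  inv_r : ∀ γ, inv (r γ) = r γ
  mul_s_s : ∀ γ, mul (s γ) (s γ) = some (s γ)
  mul_r_r : ∀ γ, mul (r γ) (r γ) = some (r γ)
  s_eq_r : ∀ {a b c}, mul a b = some c → s a = r b
  s_mul : ∀ {a b c}, mul a b = some c → s c = s b
  r_mul : ∀ {a b c}, mul a b = some c → r c = r a
  inv_mul_inv : ∀ {a b c}, mul a b = some c → mul (inv b) (inv a) = some (inv c)
  mul_assoc' : ∀ {a b c p q pc}, mul a b = some p → mul b c = some q →
    mul p c = some pc → mul a q = some pc
  continuous_inv : Continuous inv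
  continuous_s : Continuous s
  continuous_r : Continuous r
  isOpenMap_s : IsOpenMap s
  continuous_mul : Continuous fun p : {p : Γ × Γ // (mul p.1 p.2).isSome} =>
    (mul p.1.1 p.1.2).get p.2
  etale : ∀ γ : Γ, ∃ O : Set Γ, IsOpen O ∧ γ ∈ O ∧ Set.InjOn s O ∧ Set.InjOn r O

open scoped ENNReal NNReal

variable {Γ : Type*} [TopologicalSpace Γ]

/-- The unit space `Γ⁰` of an étale groupoid. -/
def EtaleGroupoid.units (G : EtaleGroupoid Γ) : Set Γ := Set.range G.s

/-- A slice: a subset on which both the source and range maps are injective. -/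
def EtaleGroupoid.IsSlice (G : EtaleGroupoid Γ) (B : Set Γ) : Prop :=
  Set.InjOn G.s B ∧ Set.InjOn G.r B

/-- Transport along an equality of base points between fibres. -/
def castE {X : Type*} {E : X → Type*} {α β : X} (h : α = β) (a : E α) : E β := h ▸ a

/-- A Fell bundle over an étale groupoid `G` on `Γ`: a Banach bundle whose
total space `Σ γ, E γ` is a topological *-semigroupoid over `Γ` with bilinear
products, antilinear involution, submultiplicative norm, the C*-identity
`‖b*b‖ = ‖b‖²`, and every `b*b` a square `a*a` of an element of the unit
fibre over `s(ρ(b))`. -/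
structure FellBundle {Γ : Type*} [TopologicalSpace Γ] (G : EtaleGroupoid Γ)
    (E : Γ → Type*) [∀ γ, NormedAddCommGroup (E γ)] [∀ γ, NormedSpace ℂ (E γ)]
    [∀ γ, CompleteSpace (E γ)] [TopologicalSpace (Σ γ, E γ)] where
  mul : ∀ {α β γ : Γ}, G.mul α β = some γ → E α → E β → E γ
  star : ∀ {γ : Γ}, E γ → E (G.inv γ)
  mul_add : ∀ {α β γ} (h : G.mul α β = some γ) (a : E α) (b c : E β),
      mul h a (b + c) = mul h a b + mul h a c
  add_mul : ∀ {α β γ} (h : G.mul α β = some γ) (a b : E α) (c : E β),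
      mul h (a + b) c = mul h a c + mul h b c
  smul_mul : ∀ {α β γ} (h : G.mul α β = some γ) (z : ℂ) (a : E α) (b : E β),
      mul h (z • a) b = z • mul h a b
  mul_smul : ∀ {α β γ} (h : G.mul α β = some γ) (z : ℂ) (a : E α) (b : E β),
      mul h a (z • b) = z • mul h a b
  mul_assoc : ∀ {a b c p q pc} (h1 : G.mul a b = some p) (h2 : G.mul b c = some q)
      (h3 : G.mul p c = some pc) (x : E a) (y : E b) (z : E c),
      mul h3 (mul h1 x y) z = mul (G.mul_assoc' h1 h2 h3) x (mul h2 y z)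
  star_add : ∀ {γ} (a b : E γ), star (a + b) = star a + star b
  star_smul : ∀ {γ} (z : ℂ) (a : E γ), star (z • a) = (starRingEnd ℂ z) • star a
  star_star : ∀ {γ} (a : E γ), star (star a) = castE (G.inv_inv γ).symm a
  star_mul : ∀ {α β γ} (h : G.mul α β = some γ) (a : E α) (b : E β),
      star (mul h a b) = mul (G.inv_mul_inv h) (star b) (star a)
  norm_mul_le : ∀ {α β γ} (h : G.mul α β = some γ) (a : E α) (b : E β),
      ‖mul h a b‖ ≤ ‖a‖ * ‖b‖
  norm_star : ∀ {γ} (a : E γ), ‖star a‖ = ‖a‖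
  cstar : ∀ {γ} (b : E γ), ‖mul (G.inv_mul γ) (star b) b‖ = ‖b‖ ^ 2
  exists_sq : ∀ {γ} (b : E γ), ∃ a : E (G.s γ),
      mul (G.mul_s_s γ) (castE (G.inv_s γ) (star a)) a = mul (G.inv_mul γ) (star b) b
  continuous_proj : Continuous (Sigma.fst : (Σ γ, E γ) → Γ)
  isOpenMap_proj : IsOpenMap (Sigma.fst : (Σ γ, E γ) → Γ)
  continuous_smul : ∀ z : ℂ, Continuous (fun b : Σ γ, E γ => (⟨b.1, z • b.2⟩ : Σ γ, E γ))
  continuous_add : Continuous (fun p : {p : (Σ γ, E γ) × (Σ γ, E γ) // p.1.1 = p.2.1} =>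
      (⟨p.1.1.1, p.1.1.2 + castE p.2.symm p.1.2.2⟩ : Σ γ, E γ))
  usc_norm : UpperSemicontinuous (fun b : Σ γ, E γ => ‖b.2‖)
  zero_lim : ∀ (l : Filter (Σ γ, E γ)) (x : Γ), Tendsto Sigma.fst l (𝓝 x) →
      Tendsto (fun b : Σ γ, E γ => ‖b.2‖) l (𝓝 (0 : ℝ)) →
      l ≤ 𝓝 (⟨x, 0⟩ : Σ γ, E γ)
  continuous_mul' : Continuous
      (fun p : {p : (Σ γ, E γ) × (Σ γ, E γ) // (G.mul p.1.1 p.2.1).isSome} =>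
        (⟨(G.mul p.1.1.1 p.1.2.1).get p.2,
          mul (Option.some_get p.2).symm p.1.1.2 p.1.2.2⟩ : Σ γ, E γ))
  continuous_star' : Continuous (fun b : Σ γ, E γ => (⟨G.inv b.1, star b.2⟩ : Σ γ, E γ))

namespace FellBundle

variable {G : EtaleGroupoid Γ} {E : Γ → Type*}
  [∀ γ, NormedAddCommGroup (E γ)] [∀ γ, NormedSpace ℂ (E γ)]
  [∀ γ, CompleteSpace (E γ)] [TopologicalSpace (Σ γ, E γ)]

/-- The convolution product of two sections: `ab(γ) = Σ_{γ=αβ} a(α)b(β)`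
(a `tsum`, i.e. junk value `0` if the sum does not converge unconditionally). -/
noncomputable def conv (F : FellBundle G E) (a b : ∀ γ, E γ) (γ : Γ) : E γ :=
  ∑' p : {p : Γ × Γ // G.mul p.1 p.2 = some γ}, F.mul p.2 (a p.1.1) (b p.1.2)

/-- The convolution product `ab` is defined: at each `γ` the net of finite
partial sums of `a(α)b(β)` over `γ = αβ` converges in the fibre `E γ`. -/
def ConvDefined (F : FellBundle G E) (a b : ∀ γ, E γ) : Prop :=
  ∀ γ : Γ, Summable (fun p : {p : Γ × Γ // G.mul p.1 p.2 = some γ} =>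
    F.mul p.2 (a p.1.1) (b p.1.2))

/-- The involution of sections: `a*(γ) = a(γ⁻¹)*`. -/
noncomputable def starSec (F : FellBundle G E) (a : ∀ γ, E γ) (γ : Γ) : E γ :=
  castE (G.inv_inv γ) (F.star (a (G.inv γ)))

/-- The pointwise *-square `a(γ)*a(γ) ∈ E (s γ)`. -/
noncomputable def starSq (F : FellBundle G E) (a : ∀ γ, E γ) (γ : Γ) : E (G.s γ) :=
  F.mul (G.inv_mul γ) (F.star (a γ)) (a γ)

/-- The (possibly infinite) supremum norm `‖a‖_∞` of a section. -/
noncomputable def supNorm (_F : FellBundle G E) (a : ∀ γ, E γ) : ℝ≥0∞ :=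
  ⨆ γ : Γ, (‖a γ‖₊ : ℝ≥0∞)

/-- The (possibly infinite) 2-norm
`‖a‖₂ = sup_{x} sup_{F ⊂ Γx finite} √‖Σ_{γ∈F} a(γ)*a(γ)‖`. -/
noncomputable def twoNorm (F : FellBundle G E) (a : ∀ γ, E γ) : ℝ≥0∞ :=
  ⨆ x : Γ, ⨆ s : Finset {γ : Γ // G.s γ = x},
    ENNReal.ofReal (Real.sqrt ‖∑ γ ∈ s, castE γ.prop (F.starSq a γ.val)‖)

/-- The (possibly infinite) 1-norm `‖a‖₁ = sup_{x∈Γ⁰} Σ_{γ∈Γx} ‖a(γ)‖`. -/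
noncomputable def oneNorm (_F : FellBundle G E) (a : ∀ γ, E γ) : ℝ≥0∞ :=
  ⨆ x : Γ, ∑' γ : {γ : Γ // G.s γ = x}, (‖a γ.val‖₊ : ℝ≥0∞)

/-- The (possibly infinite) b-norm
`‖a‖_b = sup {‖af‖₂/‖f‖₂ : f finitely supported}` (with `0/0 = 0`). -/
noncomputable def bNorm (F : FellBundle G E) (a : ∀ γ, E γ) : ℝ≥0∞ :=
  ⨆ f : {f : ∀ γ, E γ // {γ | f γ ≠ 0}.Finite},
    F.twoNorm (F.conv a f.val) / F.twoNorm f.val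

/-- Positivity in the C*-algebra unit fibre `E (s γ)`: being of the form `c*c`. -/
def posAt (F : FellBundle G E) (γ : Γ) (p : E (G.s γ)) : Prop :=
  ∃ c : E (G.s γ), p = F.mul (G.mul_s_s γ) (castE (G.inv_s γ) (F.star c)) c

/-- Positivity in the C*-algebra unit fibre `E (r γ)`: being of the form `c*c`. -/
def posAtR (F : FellBundle G E) (γ : Γ) (p : E (G.r γ)) : Prop :=
  ∃ c : E (G.r γ), p = F.mul (G.mul_r_r γ) (castE (G.inv_r γ) (F.star c)) c

end FellBundle

open Classical in
/-- The 0-restriction `a_Δ` of a section: equal to `a` on `Δ` and `0` elsewhere. -/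
noncomputable def restrictSec {Γ : Type*} {E : Γ → Type*} [∀ γ, NormedAddCommGroup (E γ)]
    (Δ : Set Γ) (a : ∀ γ, E γ) (γ : Γ) : E γ :=
  if γ ∈ Δ then a γ else 0

variable {Γ : Type*} [TopologicalSpace Γ] {G : EtaleGroupoid Γ} {E : Γ → Type*}
  [∀ γ, NormedAddCommGroup (E γ)] [∀ γ, NormedSpace ℂ (E γ)]
  [∀ γ, CompleteSpace (E γ)] [TopologicalSpace (Σ γ, E γ)]

/-! ### Auxiliary material for the proof -/

section CastLemmas

variable {X : Type*} {D : X → Type*}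

@[simp] theorem castE_rfl {α : X} (a : D α) : castE (E := D) rfl a = a := rfl

@[simp] theorem castE_self {α : X} (h : α = α) (a : D α) : castE (E := D) h a = a := rfl

@[simp] theorem castE_castE {α β δ : X} (h1 : α = β) (h2 : β = δ) (a : D α) :
    castE (E := D) h2 (castE (E := D) h1 a) = castE (h1.trans h2) a := by
  subst h1; subst h2; rfl

theorem apply_castE_congr (f : ∀ x, D x) {p q : X} (h : p = q) :
    f p = castE (E := D) h.symm (f q) := by subst h; rfl

section Norm
variable [∀ x, NormedAddCommGroup (D x)]

@[simp] theorem norm_castE {α β : X} (h : α = β) (a : D α) :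
    ‖castE (E := D) h a‖ = ‖a‖ := by subst h; rfl

@[simp] theorem castE_add {α β : X} (h : α = β) (a b : D α) :
    castE (E := D) h (a + b) = castE h a + castE h b := by subst h; rfl

@[simp] theorem castE_sub {α β : X} (h : α = β) (a b : D α) :
    castE (E := D) h (a - b) = castE h a - castE h b := by subst h; rfl

@[simp] theorem castE_neg {α β : X} (h : α = β) (a : D α) :
    castE (E := D) h (-a) = -castE h a := by subst h; rfl

@[simp] theorem castE_zero {α β : X} (h : α = β) :
    castE (E := D) h (0 : D α) = 0 := by subst h; rfl

@[simp] theorem castE_smul [∀ x, NormedSpace ℂ (D x)] {α β : X} (h : α = β) (z : ℂ) (a : D α) :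
    castE (E := D) h (z • a) = z • castE h a := by subst h; rfl

@[simp] theorem castE_sum {ι : Type*} [∀ x, NormedSpace ℂ (D x)] {α β : X} (h : α = β)
    (T : Finset ι) (v : ι → D α) :
    castE (E := D) h (∑ i ∈ T, v i) = ∑ i ∈ T, castE h (v i) := by subst h; rfl

@[simp] theorem castE_eq_zero_iff {α β : X} (h : α = β) (a : D α) :
    castE (E := D) h a = 0 ↔ a = 0 := by subst h; rfl

end Norm

end CastLemmas

namespace EtaleGroupoid

variable {Γ : Type*} [TopologicalSpace Γ] (G : EtaleGroupoid Γ)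

theorem mul_some {a b : Γ} (h : G.s a = G.r b) :
    G.mul a b = some ((G.mul a b).get ((G.mul_isSome a b).2 h)) :=
  (Option.some_get _).symm

/-- `αβ = γ` implies `α⁻¹γ = β`. -/
theorem inv_mul_cancel {α β γ : Γ} (h : G.mul α β = some γ) :
    G.mul (G.inv α) γ = some β := by
  have h3 : G.mul (G.s α) β = some β := by rw [G.s_eq_r h]; exact G.r_unit β
  exact G.mul_assoc' (G.inv_mul α) h h3

/-- `αβ = γ` implies `γβ⁻¹ = α`. -/
theorem mul_inv_cancel {α β γ : Γ} (h : G.mul α β = some γ) :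
    G.mul γ (G.inv β) = some α := by
  have hsome : (G.mul γ (G.inv β)).isSome := by
    rw [G.mul_isSome, G.r_inv, G.s_mul h]
  have h3 : G.mul γ (G.inv β) = some ((G.mul γ (G.inv β)).get hsome) :=
    (Option.some_get _).symm
  have h4 := G.mul_assoc' h (G.mul_inv β) h3
  rw [← G.s_eq_r h, G.s_unit α] at h4
  rw [h3, Option.some_inj.mp h4]

end EtaleGroupoid

namespace FellBundle

variable {Γ : Type*} [TopologicalSpace Γ] {G : EtaleGroupoid Γ} {E : Γ → Type*}
  [∀ γ, NormedAddCommGroup (E γ)] [∀ γ, NormedSpace ℂ (E γ)]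
  [∀ γ, CompleteSpace (E γ)] [TopologicalSpace (Σ γ, E γ)] (F : FellBundle G E)

@[simp] theorem mul_castL {α' α β δ : Γ} (e : α' = α) (h : G.mul α β = some δ)
    (a : E α') (b : E β) :
    F.mul h (castE e a) b = F.mul (e ▸ h) a b := by subst e; rfl

@[simp] theorem mul_castR {β' α β δ : Γ} (e : β' = β) (h : G.mul α β = some δ)
    (a : E α) (b : E β') :
    F.mul h a (castE e b) = F.mul (e ▸ h) a b := by subst e; rfl

@[simp] theorem castE_mul {α β δ δ' : Γ} (e : δ = δ') (h : G.mul α β = some δ)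
    (a : E α) (b : E β) :
    castE e (F.mul h a b) = F.mul (e ▸ h) a b := by subst e; rfl

@[simp] theorem star_castE {α' α : Γ} (e : α' = α) (a : E α') :
    F.star (castE e a) = castE (congrArg G.inv e) (F.star a) := by subst e; rfl

theorem mul_zero' {α β δ : Γ} (h : G.mul α β = some δ) (a : E α) :
    F.mul h a (0 : E β) = 0 := by
  have := F.mul_add h a 0 0
  rw [add_zero] at this
  exact add_right_injective _ (this.symm.trans (add_zero _).symm)

theorem zero_mul' {α β δ : Γ} (h : G.mul α β = some δ) (b : E β) :
    F.mul h (0 : E α) b = 0 := by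
  have := F.add_mul h 0 0 b
  rw [add_zero] at this
  exact add_right_injective _ (this.symm.trans (add_zero _).symm)

theorem star_zero' {α : Γ} : F.star (0 : E α) = 0 := by
  have := F.star_add (0 : E α) 0
  rw [add_zero] at this
  exact add_right_injective _ (this.symm.trans (add_zero _).symm)

theorem star_sub' {α : Γ} (a b : E α) : F.star (a - b) = F.star a - F.star b := by
  have h1 : a - b = a + (-1 : ℂ) • b := by simp [sub_eq_add_neg]
  rw [h1, F.star_add, F.star_smul]
  simp [sub_eq_add_neg]

theorem mul_sub' {α β δ : Γ} (h : G.mul α β = some δ) (a : E α) (b c : E β) :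
    F.mul h a (b - c) = F.mul h a b - F.mul h a c := by
  have h1 : b - c = b + (-1 : ℂ) • c := by simp [sub_eq_add_neg]
  rw [h1, F.mul_add, F.mul_smul]
  simp [sub_eq_add_neg]

theorem sub_mul' {α β δ : Γ} (h : G.mul α β = some δ) (a b : E α) (c : E β) :
    F.mul h (a - b) c = F.mul h a c - F.mul h b c := by
  have h1 : a - b = a + (-1 : ℂ) • b := by simp [sub_eq_add_neg]
  rw [h1, F.add_mul, F.smul_mul]
  simp [sub_eq_add_neg]

theorem mul_sum' {ι : Type*} {α β δ : Γ} (h : G.mul α β = some δ) (a : E α)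
    (T : Finset ι) (v : ι → E β) :
    F.mul h a (∑ i ∈ T, v i) = ∑ i ∈ T, F.mul h a (v i) :=
  map_sum (AddMonoidHom.mk' (F.mul h a) (F.mul_add h a)) v T

theorem sum_mul' {ι : Type*} {α β δ : Γ} (h : G.mul α β = some δ) (b : E β)
    (T : Finset ι) (v : ι → E α) :
    F.mul h (∑ i ∈ T, v i) b = ∑ i ∈ T, F.mul h (v i) b :=
  map_sum (AddMonoidHom.mk' (fun a => F.mul h a b) (fun a c => F.add_mul h a c b)) v T

theorem star_sum' {ι : Type*} {α : Γ} (T : Finset ι) (v : ι → E α) :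
    F.star (∑ i ∈ T, v i) = ∑ i ∈ T, F.star (v i) :=
  map_sum (AddMonoidHom.mk' F.star F.star_add) v T

/-- Reassociation with an explicitly supplied proof for the right-associated product. -/
theorem massoc {a b c p q pc : Γ} (h1 : G.mul a b = some p) (h2 : G.mul b c = some q)
    (h3 : G.mul p c = some pc) (h4 : G.mul a q = some pc) (X : E a) (Y : E b) (Z : E c) :
    F.mul h3 (F.mul h1 X Y) Z = F.mul h4 X (F.mul h2 Y Z) :=
  F.mul_assoc h1 h2 h3 X Y Z

end FellBundle

/-- A point of the unit space, with all the algebraic identities it satisfies. -/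
structure IsUnitPt {Γ : Type*} [TopologicalSpace Γ] (G : EtaleGroupoid Γ) (u : Γ) : Prop where
  inv_eq : G.inv u = u
  mul_eq : G.mul u u = some u
  s_eq : G.s u = u
  r_eq : G.r u = u

theorem isUnitPt_s {Γ : Type*} [TopologicalSpace Γ] (G : EtaleGroupoid Γ) (γ : Γ) :
    IsUnitPt G (G.s γ) :=
  ⟨G.inv_s γ, G.mul_s_s γ, G.s_s γ, G.r_s γ⟩

theorem isUnitPt_r {Γ : Type*} [TopologicalSpace Γ] (G : EtaleGroupoid Γ) (γ : Γ) :
    IsUnitPt G (G.r γ) :=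
  ⟨G.inv_r γ, G.mul_r_r γ, G.s_r γ, G.r_r γ⟩

section UnitFibre

variable {Γ : Type*} [TopologicalSpace Γ] {G : EtaleGroupoid Γ} {E : Γ → Type*}
  [∀ γ, NormedAddCommGroup (E γ)] [∀ γ, NormedSpace ℂ (E γ)]
  [∀ γ, CompleteSpace (E γ)] [TopologicalSpace (Σ γ, E γ)]

/-- The fibre over a unit, as a type synonym carrying a C⋆-algebra structure. -/
def UFib (F : FellBundle G E) {u : Γ} (_hu : IsUnitPt G u) : Type _ := E u

namespace UFib

variable (F : FellBundle G E) {u : Γ} (hu : IsUnitPt G u)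

/-- The identity map `E u → UFib F hu`. -/
def mk (a : E u) : UFib F hu := a

instance : NormedAddCommGroup (UFib F hu) := inferInstanceAs (NormedAddCommGroup (E u))
instance : NormedSpace ℂ (UFib F hu) := inferInstanceAs (NormedSpace ℂ (E u))
instance : CompleteSpace (UFib F hu) := inferInstanceAs (CompleteSpace (E u))

instance instNonUnitalRing : NonUnitalRing (UFib F hu) :=
  { (inferInstance : AddCommGroup (UFib F hu)) with
    mul := fun a b => F.mul hu.mul_eq a b
    left_distrib := fun a b c => F.mul_add hu.mul_eq a b c
    right_distrib := fun a b c => F.add_mul hu.mul_eq a b c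
    zero_mul := fun a => F.zero_mul' hu.mul_eq a
    mul_zero := fun a => F.mul_zero' hu.mul_eq a
    mul_assoc := fun a b c => F.mul_assoc hu.mul_eq hu.mul_eq hu.mul_eq a b c }

theorem mul_def (a b : UFib F hu) :
    a * b = F.mul hu.mul_eq (a : E u) (b : E u) := rfl

instance instStarRing : StarRing (UFib F hu) where
  star a := castE hu.inv_eq (F.star (a : E u))
  star_involutive a := by
    show castE hu.inv_eq (F.star (castE hu.inv_eq (F.star (a : E u)))) = a
    have key : ∀ y : E u, castE hu.inv_eq (F.star (castE hu.inv_eq (F.star y))) = y := by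
      intro y; simp [F.star_star]
    exact key a
  star_mul a b := by
    show castE hu.inv_eq (F.star (F.mul hu.mul_eq (a : E u) (b : E u))) =
      F.mul hu.mul_eq (castE hu.inv_eq (F.star (b : E u))) (castE hu.inv_eq (F.star (a : E u)))
    have key : ∀ y z : E u, castE hu.inv_eq (F.star (F.mul hu.mul_eq y z)) =
        F.mul hu.mul_eq (castE hu.inv_eq (F.star z)) (castE hu.inv_eq (F.star y)) := by
      intro y z; rw [F.star_mul]; simp
    exact key a b
  star_add a b := by
    show castE hu.inv_eq (F.star ((a : E u) + (b : E u))) = _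
    have key : ∀ y z : E u, castE hu.inv_eq (F.star (y + z)) =
        castE hu.inv_eq (F.star y) + castE hu.inv_eq (F.star z) := by
      intro y z; rw [F.star_add]; simp
    exact key a b

theorem star_def (a : UFib F hu) :
    star a = castE hu.inv_eq (F.star (a : E u)) := rfl

instance instNonUnitalNormedRing : NonUnitalNormedRing (UFib F hu) :=
  { (inferInstance : NormedAddCommGroup (UFib F hu)), instNonUnitalRing F hu with
    norm_mul_le := fun a b => F.norm_mul_le hu.mul_eq a b }

instance instCStarRing : CStarRing (UFib F hu) where
  norm_mul_self_le x := by
    have h1 : star x * x = castE hu.s_eq (F.mul (G.inv_mul u) (F.star (x : E u)) (x : E u)) := by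
      rw [mul_def, star_def]
      have key : ∀ y : E u, F.mul hu.mul_eq (castE hu.inv_eq (F.star y)) y =
          castE hu.s_eq (F.mul (G.inv_mul u) (F.star y) y) := by
        intro y; simp
      exact key x
    rw [h1]
    have key2 : ∀ y : E u,
        ‖y‖ * ‖y‖ ≤ ‖castE hu.s_eq (F.mul (G.inv_mul u) (F.star y) y)‖ := by
      intro y
      rw [show ‖castE hu.s_eq (F.mul (G.inv_mul u) (F.star y) y)‖ =
        ‖F.mul (G.inv_mul u) (F.star y) y‖ from norm_castE _ _]
      rw [F.cstar y]
      rw [pow_two]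
    exact key2 x

instance : IsScalarTower ℂ (UFib F hu) (UFib F hu) :=
  ⟨fun z a b => F.smul_mul hu.mul_eq z a b⟩

instance : SMulCommClass ℂ (UFib F hu) (UFib F hu) :=
  ⟨fun z a b => (F.mul_smul hu.mul_eq z a b).symm⟩

instance : StarModule ℂ (UFib F hu) :=
  ⟨fun z a => by
    show castE hu.inv_eq (F.star (z • (a : E u))) = _
    have key : ∀ y : E u, castE hu.inv_eq (F.star (z • y)) =
        (starRingEnd ℂ z) • castE hu.inv_eq (F.star y) := by
      intro y; rw [F.star_smul]; simp
    exact key a⟩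

instance : NonUnitalCStarAlgebra (UFib F hu) where

@[simp] theorem norm_mk (a : E u) : ‖mk F hu a‖ = ‖a‖ := rfl

@[simp] theorem mk_add (a b : E u) : mk F hu (a + b) = mk F hu a + mk F hu b := rfl
@[simp] theorem mk_smul (z : ℂ) (a : E u) : mk F hu (z • a) = z • mk F hu a := rfl
@[simp] theorem mk_zero : mk F hu 0 = 0 := rfl
@[simp] theorem mk_sub (a b : E u) : mk F hu (a - b) = mk F hu a - mk F hu b := rfl

theorem mk_mul (a b : E u) : mk F hu (F.mul hu.mul_eq a b) = mk F hu a * mk F hu b := rfl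

theorem star_mk (a : E u) : star (mk F hu a) = mk F hu (castE hu.inv_eq (F.star a)) := rfl

end UFib

end UnitFibre

section ConvSums

variable {Γ : Type*} [TopologicalSpace Γ] {G : EtaleGroupoid Γ} {E : Γ → Type*}
  [∀ γ, NormedAddCommGroup (E γ)] [∀ γ, NormedSpace ℂ (E γ)]
  [∀ γ, CompleteSpace (E γ)] [TopologicalSpace (Σ γ, E γ)]

theorem FellBundle.conv_eq_sum (F : FellBundle G E) (c d : ∀ δ, E δ) (δ : Γ)
    (T : Finset {p : Γ × Γ // G.mul p.1 p.2 = some δ})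
    (hT : ∀ p : {p : Γ × Γ // G.mul p.1 p.2 = some δ}, c p.1.1 ≠ 0 → d p.1.2 ≠ 0 → p ∈ T) :
    F.conv c d δ = ∑ p ∈ T, F.mul p.2 (c p.1.1) (d p.1.2) := by
  apply tsum_eq_sum
  intro p hp
  by_cases h1 : c p.1.1 = 0
  · rw [h1, F.zero_mul']
  · have h2 : d p.1.2 = 0 := by
      by_contra h2
      exact hp (hT p h1 h2)
    rw [h2, F.mul_zero']

variable (G) in
/-- The index type `{β | s(β) = s(γ)}`. -/
def Jt (γ : Γ) : Type _ := {β : Γ // G.s β = G.s γ}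

variable (G) (γ : Γ)

theorem jt_isSome (β : Jt G γ) : (G.mul γ (G.inv β.1)).isSome := by
  rw [G.mul_isSome, G.r_inv]
  exact β.prop.symm

/-- For `β` with `s β = s γ`, the unique `α = γ β⁻¹` with `α β = γ`. -/
def alf (β : Jt G γ) : Γ := (G.mul γ (G.inv β.1)).get (jt_isSome G γ β)

theorem alf_spec (β : Jt G γ) : G.mul γ (G.inv β.1) = some (alf G γ β) :=
  (Option.some_get _).symm

theorem alf_mul (β : Jt G γ) : G.mul (alf G γ β) β.1 = some γ := by
  have h := G.mul_inv_cancel (alf_spec G γ β)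
  rwa [G.inv_inv] at h

theorem r_alf (β : Jt G γ) : G.r (alf G γ β) = G.r γ := (G.r_mul (alf_mul G γ β)).symm

theorem s_alf (β : Jt G γ) : G.s (alf G γ β) = G.r β.1 := G.s_eq_r (alf_mul G γ β)

theorem inv_alf_mul (β : Jt G γ) : G.mul (G.inv (alf G γ β)) γ = some β.1 :=
  G.inv_mul_cancel (alf_mul G γ β)

theorem alf_mul_inv (β : Jt G γ) :
    G.mul (alf G γ β) (G.inv (alf G γ β)) = some (G.r γ) := by
  have h := G.mul_inv (alf G γ β)
  rwa [r_alf] at h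

theorem alf_inj : Function.Injective (alf G γ) := by
  intro β β' h
  have h1 := inv_alf_mul G γ β
  rw [h] at h1
  exact Subtype.ext (Option.some_inj.mp (h1.symm.trans (inv_alf_mul G γ β')))

theorem alf_of_pair {α β' : Γ} (h : G.mul α β' = some γ) :
    ∃ β : Jt G γ, β.1 = β' ∧ alf G γ β = α := by
  have hs : G.s β' = G.s γ := (G.s_mul h).symm
  refine ⟨⟨β', hs⟩, rfl, ?_⟩
  exact Option.some_inj.mp ((alf_spec G γ ⟨β', hs⟩).symm.trans (G.mul_inv_cancel h))

theorem pair_r_eq_inv {α β' : Γ} (h : G.mul α β' = some (G.r γ)) :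
    β' = G.inv α ∧ G.r α = G.r γ := by
  have hr : G.r α = G.r γ := by
    have h1 := G.r_mul h
    rw [G.r_r] at h1
    exact h1.symm
  have h2 := G.inv_mul_cancel h
  have h3 : G.mul (G.inv α) (G.s (G.inv α)) = some (G.inv α) := G.s_unit _
  rw [G.s_inv, hr] at h3
  exact ⟨Option.some_inj.mp (h2.symm.trans h3), hr⟩

theorem exists_jt_of_pair_r {α β' : Γ} (h : G.mul α β' = some (G.r γ)) :
    ∃ β : Jt G γ, alf G γ β = α ∧ β' = G.inv α := by
  obtain ⟨hβ', hr⟩ := pair_r_eq_inv G γ h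
  have hsome : (G.mul (G.inv α) γ).isSome := by
    rw [G.mul_isSome, G.s_inv, hr]
  have hβ1 : G.mul (G.inv α) γ = some ((G.mul (G.inv α) γ).get hsome) :=
    (Option.some_get _).symm
  have hsβ : G.s ((G.mul (G.inv α) γ).get hsome) = G.s γ := G.s_mul hβ1
  refine ⟨⟨_, hsβ⟩, ?_, hβ'⟩
  have h2 := G.mul_inv_cancel hβ1
  have h3 := G.inv_mul_inv h2
  rw [G.inv_inv, G.inv_inv] at h3
  exact Option.some_inj.mp ((alf_spec G γ ⟨_, hsβ⟩).symm.trans h3)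

theorem pair_s_eq_inv {β' β2 : Γ} (h : G.mul β' β2 = some (G.s γ)) :
    β' = G.inv β2 ∧ G.s β2 = G.s γ := by
  have hs : G.s β2 = G.s γ := by
    have h1 := G.s_mul h
    rw [G.s_s] at h1
    exact h1.symm
  have h2 := G.mul_inv_cancel h
  have h3 : G.mul (G.r (G.inv β2)) (G.inv β2) = some (G.inv β2) := G.r_unit _
  rw [G.r_inv, hs] at h3
  exact ⟨Option.some_inj.mp (h2.symm.trans h3), hs⟩

variable {G γ}

theorem FellBundle.starSec_inv (F : FellBundle G E) (f : ∀ δ, E δ) (α : Γ) :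
    F.starSec f (G.inv α) = F.star (f α) := by
  show castE (G.inv_inv (G.inv α)) (F.star (f (G.inv (G.inv α)))) = F.star (f α)
  rw [apply_castE_congr f (G.inv_inv α)]
  simp

variable (F : FellBundle G E) (f g : ∀ δ, E δ)

open Classical in
theorem conv_fg_sum (T : Finset (Jt G γ)) (hT : ∀ β : Jt G γ, g β.1 ≠ 0 → β ∈ T) :
    F.conv f g γ = ∑ β ∈ T, F.mul (alf_mul G γ β) (f (alf G γ β)) (g β.1) := by
  have hinj : ∀ β ∈ T, ∀ β' ∈ T,
      (⟨(alf G γ β, β.1), alf_mul G γ β⟩ : {p : Γ × Γ // G.mul p.1 p.2 = some γ}) =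
        ⟨(alf G γ β', β'.1), alf_mul G γ β'⟩ → β = β' := by
    intro β _ β' _ h
    exact Subtype.ext (congrArg (fun q => q.1.2) h)
  rw [F.conv_eq_sum f g γ (T.image (fun β => ⟨(alf G γ β, β.1), alf_mul G γ β⟩)) ?_]
  · rw [Finset.sum_image hinj]
  · intro p _ hd
    obtain ⟨β, hβ1, hβ2⟩ := alf_of_pair G γ p.2
    refine Finset.mem_image.2 ⟨β, hT β (hβ1 ▸ hd), ?_⟩
    exact Subtype.ext (Prod.ext hβ2 hβ1)

open Classical in
theorem conv_ffstar_sum (T : Finset (Jt G γ)) (hT : ∀ β : Jt G γ, f (alf G γ β) ≠ 0 → β ∈ T) :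
    F.conv f (F.starSec f) (G.r γ) =
      ∑ β ∈ T, F.mul (alf_mul_inv G γ β) (f (alf G γ β)) (F.star (f (alf G γ β))) := by
  have hinj : ∀ β ∈ T, ∀ β' ∈ T,
      (⟨(alf G γ β, G.inv (alf G γ β)), alf_mul_inv G γ β⟩ :
          {p : Γ × Γ // G.mul p.1 p.2 = some (G.r γ)}) =
        ⟨(alf G γ β', G.inv (alf G γ β')), alf_mul_inv G γ β'⟩ → β = β' := by
    intro β _ β' _ h
    exact alf_inj G γ (congrArg (fun q => q.1.1) h)
  rw [F.conv_eq_sum f (F.starSec f) (G.r γ)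
    (T.image (fun β => ⟨(alf G γ β, G.inv (alf G γ β)), alf_mul_inv G γ β⟩)) ?_]
  · rw [Finset.sum_image hinj]
    exact Finset.sum_congr rfl fun β _ => by rw [F.starSec_inv]
  · intro p hc _
    obtain ⟨β, hβ1, hβ2⟩ := exists_jt_of_pair_r G γ p.2
    refine Finset.mem_image.2 ⟨β, hT β (hβ1 ▸ hc), ?_⟩
    exact Subtype.ext (Prod.ext hβ1 (hβ2.trans (congrArg G.inv hβ1.symm)).symm)

open Classical in
theorem conv_gstarg_sum (T : Finset (Jt G γ)) (hT : ∀ β : Jt G γ, g β.1 ≠ 0 → β ∈ T) :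
    F.conv (F.starSec g) g (G.s γ) =
      ∑ β ∈ T, castE β.prop (F.mul (G.inv_mul β.1) (F.star (g β.1)) (g β.1)) := by
  have hpf : ∀ β : Jt G γ, G.mul (G.inv β.1) β.1 = some (G.s γ) := fun β => by
    have h := G.inv_mul β.1
    rwa [β.prop] at h
  have hinj : ∀ β ∈ T, ∀ β' ∈ T,
      (⟨(G.inv β.1, β.1), hpf β⟩ : {p : Γ × Γ // G.mul p.1 p.2 = some (G.s γ)}) =
        ⟨(G.inv β'.1, β'.1), hpf β'⟩ → β = β' := by
    intro β _ β' _ h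
    exact Subtype.ext (congrArg (fun q => q.1.2) h)
  rw [F.conv_eq_sum (F.starSec g) g (G.s γ)
    (T.image (fun β => ⟨(G.inv β.1, β.1), hpf β⟩)) ?_]
  · rw [Finset.sum_image hinj]
    refine Finset.sum_congr rfl fun β _ => ?_
    rw [F.starSec_inv]
    simp
  · intro p _ hd
    obtain ⟨hβ', hs⟩ := pair_s_eq_inv G γ p.2
    refine Finset.mem_image.2 ⟨⟨p.1.2, hs⟩, hT _ hd, ?_⟩
    exact Subtype.ext (Prod.ext hβ'.symm rfl)

end ConvSums

section Core

variable {Γ : Type*} [TopologicalSpace Γ] {G : EtaleGroupoid Γ} {E : Γ → Type*}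
  [∀ γ, NormedAddCommGroup (E γ)] [∀ γ, NormedSpace ℂ (E γ)]
  [∀ γ, CompleteSpace (E γ)] [TopologicalSpace (Σ γ, E γ)]

/-- The identity map `UFib F hu → E u`. -/
def UFib.toE {u : Γ} {F : FellBundle G E} {hu : IsUnitPt G u} (a : UFib F hu) : E u := a

namespace UFib
variable {u : Γ} {F : FellBundle G E} {hu : IsUnitPt G u}

@[simp] theorem toE_add (a b : UFib F hu) : (a + b).toE = a.toE + b.toE := rfl
@[simp] theorem toE_smul (z : ℂ) (a : UFib F hu) : (z • a).toE = z • a.toE := rfl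
@[simp] theorem toE_zero : (0 : UFib F hu).toE = 0 := rfl
theorem toE_mul (a b : UFib F hu) : (a * b).toE = F.mul hu.mul_eq a.toE b.toE := rfl
theorem toE_star (a : UFib F hu) : (star a).toE = castE hu.inv_eq (F.star a.toE) := rfl
@[simp] theorem toE_mk (a : E u) : (UFib.mk F hu a).toE = a := rfl
@[simp] theorem norm_toE (a : UFib F hu) : ‖a.toE‖ = ‖a‖ := rfl

end UFib

variable (F : FellBundle G E) (γ : Γ)

/-- The `E (s γ)`-valued inner product `m* n` on `E γ`. -/
def ipE (m n : E γ) : E (G.s γ) := F.mul (G.inv_mul γ) (F.star m) n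

/-- Left action of `E (r γ)` on `E γ`. -/
def mulw (c : E (G.r γ)) (m : E γ) : E γ := F.mul (G.r_unit γ) c m

/-- Action of the unitization of the fibre over `r γ` on `E γ`. -/
def actE (p : Unitization ℂ (UFib F (isUnitPt_r G γ))) (m : E γ) : E γ :=
  p.fst • m + mulw F γ p.snd.toE m

/-- Embedding of `E (s γ)` into the unitization of the fibre C⋆-algebra over `s γ`. -/
def iotaS (b : E (G.s γ)) : Unitization ℂ (UFib F (isUnitPt_s G γ)) :=
  (UFib.mk F (isUnitPt_s G γ) b : UFib F (isUnitPt_s G γ))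

theorem ipE_add_right (m n k : E γ) : ipE F γ m (n + k) = ipE F γ m n + ipE F γ m k :=
  F.mul_add _ _ _ _

theorem ipE_smul_right (w : ℂ) (m n : E γ) : ipE F γ m (w • n) = w • ipE F γ m n :=
  F.mul_smul _ _ _ _

theorem ipE_add_left (m n k : E γ) : ipE F γ (m + n) k = ipE F γ m k + ipE F γ n k := by
  unfold ipE
  rw [F.star_add, F.add_mul]

theorem ipE_smul_left (w : ℂ) (m n : E γ) :
    ipE F γ (w • m) n = (starRingEnd ℂ w) • ipE F γ m n := by
  unfold ipE
  rw [F.star_smul, F.smul_mul]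

theorem ipE_sub_left (m n k : E γ) : ipE F γ (m - n) k = ipE F γ m k - ipE F γ n k := by
  unfold ipE
  rw [F.star_sub', F.sub_mul']

theorem ipE_sub_right (m n k : E γ) : ipE F γ m (n - k) = ipE F γ m n - ipE F γ m k :=
  F.mul_sub' _ _ _ _

theorem ipE_zero_right (m : E γ) : ipE F γ m 0 = 0 := F.mul_zero' _ _

theorem ipE_sum_right {ι : Type*} (T : Finset ι) (m : E γ) (v : ι → E γ) :
    ipE F γ m (∑ i ∈ T, v i) = ∑ i ∈ T, ipE F γ m (v i) :=
  F.mul_sum' _ _ T v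

theorem ipE_sum_left {ι : Type*} (T : Finset ι) (m : E γ) (v : ι → E γ) :
    ipE F γ (∑ i ∈ T, v i) m = ∑ i ∈ T, ipE F γ (v i) m := by
  unfold ipE
  rw [F.star_sum', F.sum_mul']

theorem mulw_add (c c' : E (G.r γ)) (m : E γ) :
    mulw F γ (c + c') m = mulw F γ c m + mulw F γ c' m := F.add_mul _ _ _ _

theorem mulw_smul (w : ℂ) (c : E (G.r γ)) (m : E γ) :
    mulw F γ (w • c) m = w • mulw F γ c m := F.smul_mul _ _ _ _

theorem mulw_zero (m : E γ) : mulw F γ 0 m = 0 := F.zero_mul' _ _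

theorem mulw_sum {ι : Type*} (T : Finset ι) (v : ι → E (G.r γ)) (m : E γ) :
    mulw F γ (∑ i ∈ T, v i) m = ∑ i ∈ T, mulw F γ (v i) m := F.sum_mul' _ _ T v

theorem iotaS_add (b b' : E (G.s γ)) : iotaS F γ (b + b') = iotaS F γ b + iotaS F γ b' := by
  unfold iotaS
  rw [UFib.mk_add, Unitization.inr_add]

theorem iotaS_smul (w : ℂ) (b : E (G.s γ)) : iotaS F γ (w • b) = w • iotaS F γ b := by
  unfold iotaS
  rw [UFib.mk_smul, Unitization.inr_smul]

theorem iotaS_zero : iotaS F γ (0 : E (G.s γ)) = 0 := by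
  unfold iotaS
  rw [UFib.mk_zero, Unitization.inr_zero]

theorem iotaS_sum {ι : Type*} (T : Finset ι) (v : ι → E (G.s γ)) :
    iotaS F γ (∑ i ∈ T, v i) = ∑ i ∈ T, iotaS F γ (v i) :=
  map_sum (AddMonoidHom.mk' (iotaS F γ) (iotaS_add F γ)) v T

theorem iotaS_sub (b b' : E (G.s γ)) : iotaS F γ (b - b') = iotaS F γ b - iotaS F γ b' := by
  unfold iotaS
  rw [UFib.mk_sub, Unitization.inr_sub]

theorem iotaS_norm (b : E (G.s γ)) : ‖iotaS F γ b‖ = ‖b‖ := by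
  unfold iotaS
  rw [Unitization.norm_inr]
  rfl

/-- Squares `z* z` of bundle elements over arrows into `s γ` are nonnegative. -/
theorem iotaS_sq_nonneg {δ : Γ} (hδ : G.s δ = G.s γ) (z : E δ) :
    0 ≤ iotaS F γ (castE hδ (F.mul (G.inv_mul δ) (F.star z) z)) := by
  obtain ⟨a, ha⟩ := F.exists_sq z
  rw [← ha]
  set a' : UFib F (isUnitPt_s G γ) := UFib.mk F _ (castE hδ a) with ha'
  have key : UFib.mk F (isUnitPt_s G γ)
      (castE hδ (F.mul (G.mul_s_s δ) (castE (G.inv_s δ) (F.star a)) a)) = star a' * a' := by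
    show castE hδ (F.mul (G.mul_s_s δ) (castE (G.inv_s δ) (F.star a)) a) =
      F.mul (isUnitPt_s G γ).mul_eq
        (castE (isUnitPt_s G γ).inv_eq (F.star (castE hδ a))) (castE hδ a)
    simp
  unfold iotaS
  rw [key, Unitization.inr_mul, Unitization.inr_star]
  exact star_mul_self_nonneg _

/-- The first key identity: `⟨x, c* x⟩ = ⟨c x, x⟩`. -/
theorem identA (x : E γ) (c : E (G.r γ)) :
    ipE F γ x (mulw F γ (castE (G.inv_r γ) (F.star c)) x) = ipE F γ (mulw F γ c x) x := by
  have h₂ : G.mul (G.inv (G.r γ)) γ = some γ := by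
    rw [G.inv_r]
    exact G.r_unit γ
  unfold ipE mulw
  rw [F.star_mul, F.mul_castL]
  exact (F.massoc (G.inv_mul_inv (G.r_unit γ)) h₂ (G.inv_mul γ) (G.inv_mul γ)
    (F.star x) (F.star c) x).symm

/-- The second key identity: `⟨x, (a* a) x⟩ = ⟨a x, a x⟩`. -/
theorem identB (x : E γ) (a : E (G.r γ)) :
    ipE F γ x (mulw F γ (F.mul (isUnitPt_r G γ).mul_eq (castE (G.inv_r γ) (F.star a)) a) x)
      = ipE F γ (mulw F γ a x) (mulw F γ a x) := by
  have h₂ : G.mul (G.inv (G.r γ)) γ = some γ := by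
    rw [G.inv_r]
    exact G.r_unit γ
  unfold ipE mulw
  rw [F.star_mul, F.mul_castL]
  have h₁ : G.mul (G.inv (G.r γ)) (G.r γ) = some (G.r γ) := by
    rw [G.inv_r]
    exact (isUnitPt_r G γ).mul_eq
  rw [F.massoc h₁ (G.r_unit γ) (G.r_unit γ) h₂ (F.star a) a x]
  rw [F.massoc (G.inv_mul_inv (G.r_unit γ)) h₂ (G.inv_mul γ) (G.inv_mul γ)
    (F.star x) (F.star a) (F.mul (G.r_unit γ) a x)]

/-- The key identity: `⟨x, (d* d) x⟩ = ⟨d x, d x⟩` for `d` in the unitization. -/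
theorem keyId (x : E γ) (d : Unitization ℂ (UFib F (isUnitPt_r G γ))) :
    ipE F γ x (actE F γ (star d * d) x) = ipE F γ (actE F γ d x) (actE F γ d x) := by
  have hfst : (star d * d).fst = star d.fst * d.fst := by
    simp
  have hsnd : (star d * d).snd = star d.fst • d.snd + d.fst • star d.snd + star d.snd * d.snd := by
    simp
  unfold actE
  rw [hfst, hsnd]
  rw [show (star d.fst • d.snd + d.fst • star d.snd + star d.snd * d.snd).toE
      = star d.fst • d.snd.toE + d.fst • (star d.snd).toE + (star d.snd * d.snd).toE from rfl]
  rw [UFib.toE_star, UFib.toE_mul, UFib.toE_star]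
  rw [mulw_add, mulw_add, mulw_smul, mulw_smul]
  rw [ipE_add_right, ipE_add_right, ipE_add_right, ipE_add_left, ipE_add_right, ipE_add_right,
    ipE_smul_right, ipE_smul_right, ipE_smul_right, ipE_smul_left, ipE_smul_right,
    ipE_smul_left, ipE_smul_right]
  rw [identA F γ x d.snd.toE, identB F γ x d.snd.toE]
  simp only [starRingEnd_apply, smul_smul]
  abel

theorem actE_add (x : E γ) (p q : Unitization ℂ (UFib F (isUnitPt_r G γ))) :
    actE F γ (p + q) x = actE F γ p x + actE F γ q x := by
  unfold actE
  rw [Unitization.fst_add, Unitization.snd_add, UFib.toE_add, mulw_add, add_smul]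
  abel

/-- Scalar multiplication by a nonnegative real preserves positivity. -/
theorem nonneg_smul_of_nonneg (c : ℝ) (hc : 0 ≤ c)
    (b : Unitization ℂ (UFib F (isUnitPt_s G γ))) (hb : 0 ≤ b) : 0 ≤ c • b := by
  rw [StarOrderedRing.nonneg_iff] at hb ⊢
  induction hb using AddSubmonoid.closure_induction with
  | mem y hy =>
      obtain ⟨s, rfl⟩ := hy
      refine AddSubmonoid.subset_closure ⟨((Real.sqrt c : ℝ) : ℂ) • s, ?_⟩
      show star (((Real.sqrt c : ℝ) : ℂ) • s) * (((Real.sqrt c : ℝ) : ℂ) • s) = c • (star s * s)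
      rw [star_smul, smul_mul_smul_comm]
      rw [show (star (((Real.sqrt c : ℝ) : ℂ)) * ((Real.sqrt c : ℝ) : ℂ)) = ((c : ℝ) : ℂ) by
        rw [Complex.star_def, Complex.conj_ofReal, ← Complex.ofReal_mul, Real.mul_self_sqrt hc]]
      rw [show ((c : ℝ) : ℂ) • (star s * s) = c • (star s * s) by
        rw [Complex.coe_smul]]
  | zero =>
      rw [smul_zero]
      exact AddSubmonoid.zero_mem _
  | add a b _ _ ha hb =>
      rw [smul_add]
      exact AddSubmonoid.add_mem _ ha hb

/-- The main operator inequality: `⟨x, P x⟩ ≤ ‖P‖ ⟨x, x⟩` for selfadjoint `P`. -/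
theorem ineq1 (x : E γ) (P : E (G.r γ)) (hP : castE (G.inv_r γ) (F.star P) = P) :
    iotaS F γ (ipE F γ x (mulw F γ P x)) ≤ ((‖P‖ : ℝ) : ℂ) • iotaS F γ (ipE F γ x x) := by
  set A' := Unitization ℂ (UFib F (isUnitPt_r G γ)) with hA'
  set P' : UFib F (isUnitPt_r G γ) := UFib.mk F _ P with hP'def
  have hsa : IsSelfAdjoint (P' : A') := by
    rw [IsSelfAdjoint, ← Unitization.inr_star]
    exact congrArg _ hP
  have hle := IsSelfAdjoint.le_algebraMap_norm_self hsa
  rw [StarOrderedRing.le_iff] at hle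
  obtain ⟨p, hp, hEq⟩ := hle
  have hnn : 0 ≤ iotaS F γ (ipE F γ x (actE F γ p x)) := by
    clear hEq
    induction hp using AddSubmonoid.closure_induction with
    | mem y hy =>
        obtain ⟨s, rfl⟩ := hy
        rw [keyId]
        exact iotaS_sq_nonneg F γ rfl (actE F γ s x)
    | zero =>
        have h0 : actE F γ (0 : A') x = 0 := by
          unfold actE
          simp [mulw_zero]
        rw [h0, ipE_zero_right, iotaS_zero]
    | add a b _ _ ha hb =>
        rw [actE_add, ipE_add_right, iotaS_add]
        exact add_nonneg ha hb
  have hact1 : actE F γ (algebraMap ℝ A' ‖(P' : A')‖) x = ((‖P‖ : ℝ) : ℂ) • x := by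
    have h1 : algebraMap ℝ A' ‖(P' : A')‖ = Unitization.inl ((‖P‖ : ℝ) : ℂ) := by
      rw [IsScalarTower.algebraMap_apply ℝ ℂ A', Unitization.algebraMap_eq_inl]
      rw [Unitization.norm_inr]
      rfl
    rw [h1]
    unfold actE
    rw [Unitization.fst_inl, Unitization.snd_inl]
    simp [mulw_zero]
  have hact2 : actE F γ ((P' : A')) x = mulw F γ P x := by
    unfold actE
    rw [Unitization.fst_inr, Unitization.snd_inr]
    simp
    rfl
  have hsplit : ((‖P‖ : ℝ) : ℂ) • x = mulw F γ P x + actE F γ p x := by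
    rw [← hact1, ← hact2, hEq, actE_add]
  calc iotaS F γ (ipE F γ x (mulw F γ P x))
      ≤ iotaS F γ (ipE F γ x (mulw F γ P x)) + iotaS F γ (ipE F γ x (actE F γ p x)) :=
        le_add_of_nonneg_right hnn
    _ = iotaS F γ (ipE F γ x (((‖P‖ : ℝ) : ℂ) • x)) := by
        rw [hsplit, ipE_add_right, iotaS_add]
    _ = ((‖P‖ : ℝ) : ℂ) • iotaS F γ (ipE F γ x x) := by
        rw [ipE_smul_right, iotaS_smul]

variable {γ} in
/-- The auxiliary vector `v_β = f(γβ⁻¹)* x ∈ E β`. -/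
def vE (f : ∀ δ, E δ) (x : E γ) (β : Jt G γ) : E β.1 :=
  F.mul (inv_alf_mul G γ β) (F.star (f (alf G γ β))) x

variable {γ}

theorem termB (f g : ∀ δ, E δ) (x : E γ) (β : Jt G γ) :
    castE β.prop (F.mul (G.inv_mul β.1) (F.star (vE F f x β)) (g β.1)) =
      ipE F γ x (F.mul (alf_mul G γ β) (f (alf G γ β)) (g β.1)) := by
  have h₅ : G.mul (G.inv γ) (alf G γ β) = some (G.inv β.1) := by
    have h := G.inv_mul_inv (inv_alf_mul G γ β)
    rwa [G.inv_inv] at h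
  have h₄ : G.mul (G.inv γ) γ = some (G.s β.1) := by
    rw [β.prop]
    exact G.inv_mul γ
  unfold vE
  rw [F.star_mul, F.star_star, F.mul_castR]
  rw [F.massoc h₅ (alf_mul G γ β) (G.inv_mul β.1) h₄ (F.star x) (f (alf G γ β)) (g β.1)]
  simp [ipE]

theorem termC (f g : ∀ δ, E δ) (x : E γ) (β : Jt G γ) :
    castE β.prop (F.mul (G.inv_mul β.1) (F.star (g β.1)) (vE F f x β)) =
      ipE F γ (F.mul (alf_mul G γ β) (f (alf G γ β)) (g β.1)) x := by
  have h₄ : G.mul (G.inv β.1) β.1 = some (G.s γ) := by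
    have h := G.inv_mul β.1
    rwa [β.prop] at h
  unfold ipE
  rw [F.star_mul]
  rw [F.massoc (G.inv_mul_inv (alf_mul G γ β)) (inv_alf_mul G γ β) (G.inv_mul γ) h₄
    (F.star (g β.1)) (F.star (f (alf G γ β))) x]
  simp [vE]

theorem termA (f : ∀ δ, E δ) (x : E γ) (β : Jt G γ) :
    castE β.prop (F.mul (G.inv_mul β.1) (F.star (vE F f x β)) (vE F f x β)) =
      ipE F γ x (mulw F γ (F.mul (alf_mul_inv G γ β) (f (alf G γ β))
        (F.star (f (alf G γ β)))) x) := by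
  have h₅ : G.mul (G.inv γ) (alf G γ β) = some (G.inv β.1) := by
    have h := G.inv_mul_inv (inv_alf_mul G γ β)
    rwa [G.inv_inv] at h
  have h₄ : G.mul (G.inv γ) γ = some (G.s β.1) := by
    rw [β.prop]
    exact G.inv_mul γ
  have h₃ : G.mul (G.r (alf G γ β)) γ = some γ := by
    rw [r_alf]
    exact G.r_unit γ
  -- right-hand side normalisation
  have hcast : F.mul (alf_mul_inv G γ β) (f (alf G γ β)) (F.star (f (alf G γ β))) =
      castE (r_alf G γ β) (F.mul (G.mul_inv (alf G γ β)) (f (alf G γ β))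
        (F.star (f (alf G γ β)))) := by
    simp
  conv_lhs => rw [show F.mul (G.inv_mul β.1) (F.star (vE F f x β)) (vE F f x β) =
    F.mul (G.inv_mul β.1) (F.star (vE F f x β)) (vE F f x β) from rfl]
  unfold vE
  rw [F.star_mul, F.star_star, F.mul_castR]
  rw [F.massoc h₅ (alf_mul G γ β) (G.inv_mul β.1) h₄ (F.star x) (f (alf G γ β))
    (F.mul (inv_alf_mul G γ β) (F.star (f (alf G γ β))) x)]
  rw [← F.massoc (G.mul_inv (alf G γ β)) (inv_alf_mul G γ β) h₃ (alf_mul G γ β)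
    (f (alf G γ β)) (F.star (f (alf G γ β))) x]
  rw [hcast]
  unfold ipE mulw
  rw [F.mul_castL]
  simp

end Core

/-- Cauchy-Schwarz for convolution of finitely supported sections:
`‖fg(γ)‖ ≤ √(‖ff*(r γ)‖ ‖g*g(s γ)‖)`. -/
theorem stmt11 (F : FellBundle G E) (f g : ∀ γ, E γ)
    (hf : {γ | f γ ≠ 0}.Finite) (hg : {γ | g γ ≠ 0}.Finite) (γ : Γ) :
    ‖F.conv f g γ‖ ≤
      Real.sqrt (‖F.conv f (F.starSec f) (G.r γ)‖ * ‖F.conv (F.starSec g) g (G.s γ)‖) := by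
  classical
  set x : E γ := F.conv f g γ with hxdef
  set P : E (G.r γ) := F.conv f (F.starSec f) (G.r γ) with hPdef
  set Q : E (G.s γ) := F.conv (F.starSec g) g (G.s γ) with hQdef
  -- the finite index set
  have hfin1 : {β : Jt G γ | g β.1 ≠ 0}.Finite :=
    Set.Finite.preimage (Set.injOn_of_injective Subtype.val_injective) hg
  have hfin2 : {β : Jt G γ | f (alf G γ β) ≠ 0}.Finite :=
    Set.Finite.preimage (Set.injOn_of_injective (alf_inj G γ)) hf
  set T : Finset (Jt G γ) := (hfin1.union hfin2).toFinset with hTdef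
  have hTg : ∀ β : Jt G γ, g β.1 ≠ 0 → β ∈ T := fun β h =>
    (Set.Finite.mem_toFinset _).2 (Or.inl h)
  have hTf : ∀ β : Jt G γ, f (alf G γ β) ≠ 0 → β ∈ T := fun β h =>
    (Set.Finite.mem_toFinset _).2 (Or.inr h)
  -- finite-sum representations
  have hxs : x = ∑ β ∈ T, F.mul (alf_mul G γ β) (f (alf G γ β)) (g β.1) :=
    conv_fg_sum F f g T hTg
  have hPs : P = ∑ β ∈ T, F.mul (alf_mul_inv G γ β) (f (alf G γ β)) (F.star (f (alf G γ β))) :=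
    conv_ffstar_sum F f T hTf
  have hQs : Q = ∑ β ∈ T, castE β.prop (F.mul (G.inv_mul β.1) (F.star (g β.1)) (g β.1)) :=
    conv_gstarg_sum F g T hTg
  -- P is selfadjoint
  have hPsa : castE (G.inv_r γ) (F.star P) = P := by
    rw [hPs, F.star_sum', castE_sum]
    refine Finset.sum_congr rfl fun β _ => ?_
    rw [F.star_mul, F.star_star]
    simp
  -- abbreviations
  set v : (β : Jt G γ) → E β.1 := vE F f x with hvdef
  set R1 : E (G.s γ) := ipE F γ x (mulw F γ P x) with hR1def
  set R2 : E (G.s γ) := ipE F γ x x with hR2def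
  -- the three sum identities
  have sumA : ∑ β ∈ T, castE β.prop (F.mul (G.inv_mul β.1) (F.star (v β)) (v β)) = R1 := by
    rw [Finset.sum_congr rfl fun β _ => termA F f x β]
    rw [hR1def, hPs, mulw_sum, ipE_sum_right]
  have sumB : ∑ β ∈ T, castE β.prop (F.mul (G.inv_mul β.1) (F.star (v β)) (g β.1)) = R2 := by
    rw [Finset.sum_congr rfl fun β _ => termB F f g x β]
    rw [hR2def, ← ipE_sum_right, ← hxs]
  have sumC : ∑ β ∈ T, castE β.prop (F.mul (G.inv_mul β.1) (F.star (g β.1)) (v β)) = R2 := by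
    rw [Finset.sum_congr rfl fun β _ => termC F f g x β]
    rw [hR2def, ← ipE_sum_left, ← hxs]
  -- positivity and norms of the basic quantities
  have hR2nn : 0 ≤ iotaS F γ R2 := iotaS_sq_nonneg F γ rfl x
  have hR2norm : ‖iotaS F γ R2‖ = ‖x‖ ^ 2 := by
    rw [iotaS_norm]
    exact F.cstar x
  have hQnorm : ‖iotaS F γ Q‖ = ‖Q‖ := iotaS_norm F γ Q
  -- the quadratic inequality for every positive θ
  have hmono : ∀ (c : ℝ) (a b : Unitization ℂ (UFib F (isUnitPt_s G γ))),
      0 ≤ c → a ≤ b → c • a ≤ c • b := by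
    intro c a b hc hab
    rw [← sub_nonneg, ← smul_sub]
    exact nonneg_smul_of_nonneg F γ c hc _ (sub_nonneg.2 hab)
  have hIneq1 : iotaS F γ R1 ≤ ‖P‖ • iotaS F γ R2 := by
    have h := ineq1 F γ x P hPsa
    rw [Complex.coe_smul] at h
    exact h
  have hθ : ∀ θ : ℝ, 0 < θ → 2 * θ * ‖x‖ ^ 2 ≤ θ * θ * ‖P‖ * ‖x‖ ^ 2 + ‖Q‖ := by
    intro θ hθpos
    -- the sum of squares
    have hsq : 0 ≤ ∑ β ∈ T, iotaS F γ (castE β.prop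
        (F.mul (G.inv_mul β.1) (F.star ((θ : ℂ) • v β - g β.1)) ((θ : ℂ) • v β - g β.1))) :=
      Finset.sum_nonneg fun β _ => iotaS_sq_nonneg F γ β.prop _
    -- expand each term
    have hexp : ∀ β ∈ T, iotaS F γ (castE β.prop
        (F.mul (G.inv_mul β.1) (F.star ((θ : ℂ) • v β - g β.1)) ((θ : ℂ) • v β - g β.1)))
        = ((θ : ℂ) • ((θ : ℂ) •
              iotaS F γ (castE β.prop (F.mul (G.inv_mul β.1) (F.star (v β)) (v β))))
            - (θ : ℂ) • iotaS F γ (castE β.prop (F.mul (G.inv_mul β.1) (F.star (v β)) (g β.1))))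
          - ((θ : ℂ) • iotaS F γ (castE β.prop (F.mul (G.inv_mul β.1) (F.star (g β.1)) (v β)))
            - iotaS F γ (castE β.prop (F.mul (G.inv_mul β.1) (F.star (g β.1)) (g β.1)))) := by
      intro β _
      rw [F.star_sub', F.star_smul, Complex.conj_ofReal]
      rw [F.sub_mul', F.mul_sub', F.mul_sub']
      simp only [F.smul_mul, F.mul_smul]
      simp only [castE_sub, castE_smul]
      simp only [iotaS_sub, iotaS_smul]
    have hsum : ∑ β ∈ T, iotaS F γ (castE β.prop
        (F.mul (G.inv_mul β.1) (F.star ((θ : ℂ) • v β - g β.1)) ((θ : ℂ) • v β - g β.1)))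
        = ((θ : ℂ) • ((θ : ℂ) • iotaS F γ R1) - (θ : ℂ) • iotaS F γ R2)
          - ((θ : ℂ) • iotaS F γ R2 - iotaS F γ Q) := by
      rw [Finset.sum_congr rfl hexp]
      rw [Finset.sum_sub_distrib, Finset.sum_sub_distrib, Finset.sum_sub_distrib]
      rw [← Finset.smul_sum, ← Finset.smul_sum, ← Finset.smul_sum, ← Finset.smul_sum]
      rw [← iotaS_sum, ← iotaS_sum, ← iotaS_sum, ← iotaS_sum]
      rw [sumA, sumB, sumC, ← hQs]
    rw [hsum] at hsq
    simp only [Complex.coe_smul] at hsq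
    -- rearrange into an order inequality
    have h3 : θ • iotaS F γ R2 + θ • iotaS F γ R2 ≤ θ • (θ • iotaS F γ R1) + iotaS F γ Q := by
      rw [← sub_nonneg]
      convert hsq using 1
      abel
    have h4 : θ • (θ • iotaS F γ R1) ≤ θ • (θ • (‖P‖ • iotaS F γ R2)) :=
      hmono θ _ _ hθpos.le (hmono θ _ _ hθpos.le hIneq1)
    have h5 : (2 * θ) • iotaS F γ R2 ≤ (θ * θ * ‖P‖) • iotaS F γ R2 + iotaS F γ Q := by
      calc (2 * θ) • iotaS F γ R2 = θ • iotaS F γ R2 + θ • iotaS F γ R2 := by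
            rw [← add_smul]; ring_nf
        _ ≤ θ • (θ • iotaS F γ R1) + iotaS F γ Q := h3
        _ ≤ θ • (θ • (‖P‖ • iotaS F γ R2)) + iotaS F γ Q := add_le_add_left h4 _
        _ = (θ * θ * ‖P‖) • iotaS F γ R2 + iotaS F γ Q := by
            rw [smul_smul, smul_smul]
    have h6 : 0 ≤ (2 * θ) • iotaS F γ R2 :=
      nonneg_smul_of_nonneg F γ _ (by positivity) _ hR2nn
    have h7 := CStarAlgebra.norm_le_norm_of_nonneg_of_le h6 h5
    have h8 : ‖(2 * θ) • iotaS F γ R2‖ = 2 * θ * ‖x‖ ^ 2 := by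
      rw [norm_smul, Real.norm_of_nonneg (by positivity : (0:ℝ) ≤ 2 * θ), hR2norm]
    have h9 : ‖(θ * θ * ‖P‖) • iotaS F γ R2 + iotaS F γ Q‖ ≤ θ * θ * ‖P‖ * ‖x‖ ^ 2 + ‖Q‖ := by
      refine (norm_add_le _ _).trans ?_
      rw [norm_smul, Real.norm_of_nonneg (by positivity : (0:ℝ) ≤ θ * θ * ‖P‖), hR2norm, hQnorm]
    rw [h8] at h7
    linarith [h7.trans h9]
  -- the endgame
  rcases eq_or_lt_of_le (norm_nonneg x) with hx0 | hx0
  · rw [← hx0]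
    exact Real.sqrt_nonneg _
  · have hx2 : 0 < ‖x‖ ^ 2 := by positivity
    have hQ0 : 0 ≤ ‖Q‖ := norm_nonneg Q
    rcases eq_or_lt_of_le (norm_nonneg P) with hP0 | hP0
    · exfalso
      have h1 := hθ ((‖Q‖ + 1) / (2 * ‖x‖ ^ 2)) (by positivity)
      rw [← hP0] at h1
      have h2 : 2 * ((‖Q‖ + 1) / (2 * ‖x‖ ^ 2)) * ‖x‖ ^ 2 = ‖Q‖ + 1 := by
        field_simp
      rw [h2] at h1
      simp only [mul_zero, zero_mul] at h1
      linarith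
    · have h1 := hθ (1 / ‖P‖) (by positivity)
      have h2 : 1 / ‖P‖ * (1 / ‖P‖) * ‖P‖ = 1 / ‖P‖ := by
        field_simp
      rw [h2] at h1
      have h3 : 1 / ‖P‖ * ‖x‖ ^ 2 ≤ ‖Q‖ := by linarith
      have h4 : ‖x‖ ^ 2 ≤ ‖P‖ * ‖Q‖ := by
        have h5 := mul_le_mul_of_nonneg_left h3 hP0.le
        calc ‖x‖ ^ 2 = ‖P‖ * (1 / ‖P‖ * ‖x‖ ^ 2) := by
              field_simp
          _ ≤ ‖P‖ * ‖Q‖ := h5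
      exact (Real.le_sqrt (norm_nonneg x) (by positivity)).2 h4
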